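/- arXiv:1811.08814 — 2 statements merged into one kernel-verified Lean document; each statement's English description precedes it below -/
import Mathlib

section
/- If f : ℝ^d → ℝ is Lipschitz with constant r and has support contained in the centered ball of radius N, then for any unit vector ν and any real numbers s₁, s₂, the Radon transform satisfies |R(f)(ν,s₁) − R(f)(ν,s₂)| ≤ r·N^{d−1}·|s₁ − s₂| (up to the volume constant of the (d−1)-dimensional unit ball). -/
open MeasureTheory

/-- The Radon transform of `f : ℝ^d → ℝ`:
`R(f)(ν, s) = ∫_{ν^⊥} f (s • ν + y) dy`, the integral of `f` over the hyperplane
through `s • ν` orthogonal to `ν`. -/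
noncomputable def radonTransform {d : ℕ} (f : EuclideanSpace ℝ (Fin d) → ℝ)
    (ν : EuclideanSpace ℝ (Fin d)) (s : ℝ) : ℝ :=
  ∫ y : (ℝ ∙ ν)ᗮ, f (s • ν + (y : EuclideanSpace ℝ (Fin d)))

/-- If `f : ℝ^d → ℝ` is Lipschitz with constant `r` and has support contained in the
centered ball of radius `N ≥ 0`, then for any unit vector `ν` and reals `s₁, s₂`,
`|R(f)(ν,s₁) − R(f)(ν,s₂)| ≤ C_{d-1} · r · N^{d−1} · |s₁ − s₂|`, where `C_{d-1}` is the
volume of the unit ball in dimension `d − 1`. -/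
theorem radonTransform_lipschitz {d : ℕ} (f : EuclideanSpace ℝ (Fin d) → ℝ)
    (r : NNReal) (hf : LipschitzWith r f) (N : ℝ) (hN : 0 ≤ N)
    (hsupp : Function.support f ⊆ Metric.closedBall 0 N)
    (ν : EuclideanSpace ℝ (Fin d)) (hν : ‖ν‖ = 1) (s₁ s₂ : ℝ) :
    |radonTransform f ν s₁ - radonTransform f ν s₂| ≤
      (volume (Metric.closedBall (0 : EuclideanSpace ℝ (Fin (d - 1))) 1)).toReal *
        r * N ^ (d - 1) * |s₁ - s₂| := by
  have hν0 : ν ≠ 0 := fun h => by simp [h] at hν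
  set E := (ℝ ∙ ν)ᗮ with hE
  have hfin : Module.finrank ℝ E = d - 1 := by
    have h1 : Module.finrank ℝ (ℝ ∙ ν) = 1 := finrank_span_singleton hν0
    have h2 : Module.finrank ℝ (ℝ ∙ ν) + Module.finrank ℝ E = d := by
      rw [hE, Submodule.finrank_add_finrank_orthogonal]
      exact finrank_euclideanSpace_fin
    omega
  -- properties of the integrand
  have hcont : ∀ s : ℝ, Continuous (fun y : E => f (s • ν + (y : EuclideanSpace ℝ (Fin d)))) :=
    fun s => hf.continuous.comp (continuous_const.add continuous_subtype_val)
  have hsub : ∀ s : ℝ, ∀ y : E, y ∉ Metric.closedBall (0 : E) N →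
      f (s • ν + (y : EuclideanSpace ℝ (Fin d))) = 0 := by
    intro s y hy
    by_contra h
    apply hy
    have hmem := hsupp h
    simp only [Metric.mem_closedBall, dist_zero_right] at hmem ⊢
    have horth : inner (𝕜 := ℝ) (s • ν) (y : EuclideanSpace ℝ (Fin d)) = 0 :=
      y.2 (s • ν) (Submodule.smul_mem _ s (Submodule.mem_span_singleton_self ν))
    have hpyth : ‖s • ν + (y : EuclideanSpace ℝ (Fin d))‖ * ‖s • ν + (y : EuclideanSpace ℝ (Fin d))‖
        = ‖s • ν‖ * ‖s • ν‖ + ‖(y : EuclideanSpace ℝ (Fin d))‖ * ‖(y : EuclideanSpace ℝ (Fin d))‖ :=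
      norm_add_sq_eq_norm_sq_add_norm_sq_real horth
    have : ‖y‖ = ‖(y : EuclideanSpace ℝ (Fin d))‖ := rfl
    rw [this]
    nlinarith [norm_nonneg (y : EuclideanSpace ℝ (Fin d)), norm_nonneg (s • ν),
      norm_nonneg (s • ν + (y : EuclideanSpace ℝ (Fin d))), hmem,
      mul_self_nonneg ‖s • ν‖]
  have hint : ∀ s : ℝ, Integrable (fun y : E => f (s • ν + (y : EuclideanSpace ℝ (Fin d)))) := by
    intro s
    exact (hcont s).integrable_of_hasCompactSupport
      (HasCompactSupport.intro (isCompact_closedBall 0 N) (hsub s))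
  -- rewrite as a single integral
  have hdiff : radonTransform f ν s₁ - radonTransform f ν s₂
      = ∫ y : E, (f (s₁ • ν + (y : EuclideanSpace ℝ (Fin d)))
          - f (s₂ • ν + (y : EuclideanSpace ℝ (Fin d)))) := by
    rw [radonTransform, radonTransform, ← integral_sub (hint s₁) (hint s₂)]
  set h : E → ℝ := fun y => f (s₁ • ν + (y : EuclideanSpace ℝ (Fin d)))
      - f (s₂ • ν + (y : EuclideanSpace ℝ (Fin d))) with hh
  have hzero : ∀ y : E, y ∉ Metric.closedBall (0 : E) N → h y = 0 := by
    intro y hy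
    simp [hh, hsub s₁ y hy, hsub s₂ y hy]
  have hbound : ∀ y ∈ Metric.closedBall (0 : E) N, ‖h y‖ ≤ (r : ℝ) * |s₁ - s₂| := by
    intro y _
    have := hf.dist_le_mul (s₁ • ν + (y : EuclideanSpace ℝ (Fin d)))
      (s₂ • ν + (y : EuclideanSpace ℝ (Fin d)))
    rw [Real.dist_eq] at this
    refine this.trans (le_of_eq ?_)
    rw [dist_eq_norm]
    have : (s₁ • ν + (y : EuclideanSpace ℝ (Fin d)))
        - (s₂ • ν + (y : EuclideanSpace ℝ (Fin d))) = (s₁ - s₂) • ν := by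
      rw [sub_smul]; abel
    rw [this, norm_smul, hν, Real.norm_eq_abs, mul_one]
  have hlt : volume (Metric.closedBall (0 : E) N) < ⊤ :=
    (isCompact_closedBall (0 : E) N).measure_lt_top
  have key : |radonTransform f ν s₁ - radonTransform f ν s₂|
      ≤ (r : ℝ) * |s₁ - s₂| * (volume (Metric.closedBall (0 : E) N)).toReal := by
    rw [hdiff, ← setIntegral_eq_integral_of_forall_compl_eq_zero hzero]
    exact norm_setIntegral_le_of_norm_le_const hlt hbound
  -- compute the volume
  have hvol1 : volume (Metric.closedBall (0 : E) 1)
      = volume (Metric.closedBall (0 : EuclideanSpace ℝ (Fin (d - 1))) 1) := by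
    have e : E ≃ₗᵢ[ℝ] EuclideanSpace ℝ (Fin (d - 1)) :=
      hfin ▸ (stdOrthonormalBasis ℝ E).repr
    have hmp := e.measurePreserving
    have hpre : e ⁻¹' Metric.closedBall (0 : EuclideanSpace ℝ (Fin (d - 1))) 1
        = Metric.closedBall (0 : E) 1 := by
      ext x
      simp [Metric.mem_closedBall, dist_zero_right, e.norm_map]
    rw [← hpre, hmp.measure_preimage measurableSet_closedBall.nullMeasurableSet]
  have hvolN : volume (Metric.closedBall (0 : E) N)
      = ENNReal.ofReal (N ^ (d - 1)) * volume (Metric.closedBall (0 : E) 1) := by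
    rw [Measure.addHaar_closedBall' volume (0 : E) hN, hfin]
  refine key.trans (le_of_eq ?_)
  rw [hvolN, hvol1, ENNReal.toReal_mul, ENNReal.toReal_ofReal (by positivity)]
  ring
end

section
/- For a unit vector ν and s ∈ ℝ, define A_ν(f)(s) = R(f)(ν,s). Then for any Schwartz function f on ℝ^d, the d-dimensional Fourier transform of f evaluated at sν equals the 1-dimensional Fourier transform of A_ν(f) evaluated at s (the Fourier slice theorem), up to the normalizing constant (2π)^{(d−1)/2}. -/
open MeasureTheory MeasureTheory.Measure Real
open scoped RealInnerProductSpace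

/-- The `d`-dimensional Fourier transform with normalization `(2π)^{-d/2}`:
`T(f)(z) = (2π)^{-d/2} ∫ f(x) e^{-i x·z} dx`. -/
noncomputable def fourierT {d : ℕ} (f : EuclideanSpace ℝ (Fin d) → ℝ)
    (z : EuclideanSpace ℝ (Fin d)) : ℂ :=
  ((2 * π : ℝ) ^ (-(d : ℝ) / 2) : ℝ) *
    ∫ x : EuclideanSpace ℝ (Fin d), (f x : ℂ) * Complex.exp (-Complex.I * (⟪x, z⟫ : ℝ))

/-- The one-dimensional Fourier transform with normalization `(2π)^{-1/2}`. -/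
noncomputable def fourierT1 (g : ℝ → ℝ) (s : ℝ) : ℂ :=
  ((2 * π : ℝ) ^ (-(1 : ℝ) / 2) : ℝ) *
    ∫ ς : ℝ, (g ς : ℂ) * Complex.exp (-Complex.I * (s * ς))

theorem slice_integral {m : ℕ} (ν : EuclideanSpace ℝ (Fin (m+1))) (hν : ‖ν‖ = 1)
    (F : EuclideanSpace ℝ (Fin (m+1)) → ℂ) (hFi : Integrable F) :
    ∫ x, F x = ∫ t : ℝ, ∫ y : (ℝ ∙ ν)ᗮ, F (t • ν + (y : EuclideanSpace ℝ (Fin (m+1)))) := by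
  have hν0 : ν ≠ 0 := fun h => by simp [h] at hν
  set K : Submodule ℝ (EuclideanSpace ℝ (Fin (m+1))) := (ℝ ∙ ν)ᗮ with hKdef
  have hK : Module.finrank ℝ K = m := by
    have h2 : Module.finrank ℝ (ℝ ∙ ν) + Module.finrank ℝ K = m + 1 := by
      rw [Submodule.finrank_add_finrank_orthogonal, finrank_euclideanSpace_fin]
    rw [finrank_span_singleton hν0] at h2
    omega
  set c : OrthonormalBasis (Fin m) ℝ K := (stdOrthonormalBasis ℝ K).reindex (finCongr hK) with hc
  set v : Fin (m+1) → EuclideanSpace ℝ (Fin (m+1)) := Fin.cons ν (fun i => (c i : EuclideanSpace ℝ (Fin (m+1)))) with hv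
  have hmem : ∀ i, (c i : EuclideanSpace ℝ (Fin (m+1))) ∈ K := fun i => (c i).2
  have hortho : ∀ i, ⟪ν, (c i : EuclideanSpace ℝ (Fin (m+1)))⟫ = 0 := fun i =>
    (Submodule.mem_orthogonal _ _).1 (hmem i) ν (Submodule.mem_span_singleton_self ν)
  have honv : Orthonormal ℝ v := by
    constructor
    · intro i
      refine Fin.cases ?_ ?_ i
      · simpa only [hv, Fin.cons_zero] using hν
      · intro j
        simp only [hv, Fin.cons_succ]
        rw [Submodule.norm_coe]
        exact c.orthonormal.1 j
    · intro i j hij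
      rcases Fin.eq_zero_or_eq_succ i with rfl | ⟨i', rfl⟩ <;>
        rcases Fin.eq_zero_or_eq_succ j with rfl | ⟨j', rfl⟩
      · exact absurd rfl hij
      · simp only [hv, Fin.cons_zero, Fin.cons_succ]
        exact hortho j'
      · simp only [hv, Fin.cons_zero, Fin.cons_succ]
        exact (real_inner_comm _ _).trans (hortho i')
      · have hij' : i' ≠ j' := fun h => hij (by rw [h])
        have h2 := c.orthonormal.2 hij'
        simp only [hv, Fin.cons_succ]
        rw [← Submodule.coe_inner]
        exact h2
  have hsp : ⊤ ≤ Submodule.span ℝ (Set.range v) :=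
    (honv.linearIndependent.span_eq_top_of_card_eq_finrank
      (by simp [finrank_euclideanSpace_fin])).ge
  set b : OrthonormalBasis (Fin (m+1)) ℝ (EuclideanSpace ℝ (Fin (m+1))) := OrthonormalBasis.mk honv hsp with hbdef
  -- decomposition
  have hdecomp : ∀ u : EuclideanSpace ℝ (Fin (m+1)),
      b.repr.symm u = u 0 • ν + ((c.repr.symm (WithLp.toLp 2 (fun i : Fin m => u i.succ)) : K) : EuclideanSpace ℝ (Fin (m+1))) := by
    intro u
    have h1 : b.repr.symm u = ∑ i, u i • v i := by
      rw [← OrthonormalBasis.sum_repr_symm]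
      simp [hbdef, OrthonormalBasis.coe_mk]
    have h2 : ((c.repr.symm (WithLp.toLp 2 (fun i : Fin m => u i.succ)) : K) : EuclideanSpace ℝ (Fin (m+1)))
        = ∑ i : Fin m, u i.succ • (c i : EuclideanSpace ℝ (Fin (m+1))) := by
      rw [← c.sum_repr_symm]
      push_cast
      rfl
    rw [h1, h2, Fin.sum_univ_succ]
    simp [hv]
  -- the measurable equiv chain
  set e1 : (Fin (m+1) → ℝ) ≃ᵐ ℝ × (Fin m → ℝ) :=
    MeasurableEquiv.piFinSuccAbove (fun _ : Fin (m+1) => ℝ) 0 with he1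
  have hmp1 : MeasurePreserving e1.symm (volume.prod volume) volume := by
    have := (measurePreserving_piFinSuccAbove (fun _ : Fin (m+1) => (volume : Measure ℝ)) 0).symm
    rw [← volume_pi, ← volume_pi, ← volume_eq_prod] at this
    exact this
  set e2 : (Fin (m+1) → ℝ) ≃ᵐ EuclideanSpace ℝ (Fin (m+1)) := (MeasurableEquiv.toLp 2 (Fin (m+1) → ℝ)) with he2
  have hmp2 : MeasurePreserving e2 volume volume :=
    (EuclideanSpace.volume_preserving_symm_measurableEquiv_toLp (Fin (m+1))).symm
  set e3 : EuclideanSpace ℝ (Fin (m+1)) ≃ᵐ EuclideanSpace ℝ (Fin (m+1)) := b.measurableEquiv.symm with he3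
  have hmp3 : MeasurePreserving e3 volume volume := b.measurePreserving_measurableEquiv.symm
  set Φ : ℝ × (Fin m → ℝ) ≃ᵐ EuclideanSpace ℝ (Fin (m+1)) := (e1.symm.trans e2).trans e3 with hΦdef
  have hΦ : MeasurePreserving Φ (volume.prod volume) volume := by
    exact (hmp3.comp (hmp2.comp hmp1))
  have hΦapply : ∀ t : ℝ, ∀ w : Fin m → ℝ,
      Φ (t, w) = t • ν + ((c.repr.symm ((MeasurableEquiv.toLp 2 (Fin m → ℝ)) w) : K) : EuclideanSpace ℝ (Fin (m+1))) := by
    intro t w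
    show e3 (e2 (e1.symm (t, w))) = _
    have h0 : e1.symm (t, w) = Fin.cons t w := by
      simp [he1, MeasurableEquiv.piFinSuccAbove_symm_apply, Fin.insertNthEquiv, Fin.insertNth_zero]
    rw [h0]
    show b.repr.symm ((MeasurableEquiv.toLp 2 (Fin (m+1) → ℝ)) (Fin.cons t w)) = _
    rw [hdecomp]
    rfl
  calc ∫ x, F x = ∫ q : ℝ × (Fin m → ℝ), F (Φ q) ∂(volume.prod volume) :=
        (hΦ.integral_comp' F).symm
    _ = ∫ t : ℝ, ∫ w : Fin m → ℝ, F (Φ (t, w)) := by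
        rw [MeasureTheory.integral_prod]
        exact (hΦ.integrable_comp_emb Φ.measurableEmbedding).2 hFi
    _ = ∫ t : ℝ, ∫ y : K, F (t • ν + (y : EuclideanSpace ℝ (Fin (m+1)))) := by
        refine integral_congr_ae (Filter.Eventually.of_forall fun t => ?_)
        simp_rw [hΦapply t]
        have := ((EuclideanSpace.volume_preserving_symm_measurableEquiv_toLp (Fin m)).symm).integral_comp'
          (f := (MeasurableEquiv.toLp 2 (Fin m → ℝ)))
          (fun w' : EuclideanSpace ℝ (Fin m) => F (t • ν + ((c.repr.symm w' : K) : EuclideanSpace ℝ (Fin (m+1)))))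
        rw [this]
        exact MeasureTheory.integral_comp (c.repr.symm : EuclideanSpace ℝ (Fin m) ≃ₗᵢ[ℝ] K)
          (fun y : K => F (t • ν + (y : EuclideanSpace ℝ (Fin (m+1)))))

/-- **Fourier slice theorem**: for a Schwartz function `f` on `ℝ^d` and a unit vector `ν`,
the `d`-dimensional Fourier transform of `f` at `s • ν` equals, up to the constant
`(2π)^{(d-1)/2}`, the one-dimensional Fourier transform of `A_ν(f)(s) = R(f)(ν, s)`. -/
theorem fourier_slice {d : ℕ} (f : SchwartzMap (EuclideanSpace ℝ (Fin d)) ℝ)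
    (ν : EuclideanSpace ℝ (Fin d)) (hν : ‖ν‖ = 1) (s : ℝ) :
    ((2 * π : ℝ) ^ (((d : ℝ) - 1) / 2) : ℝ) * fourierT (fun x => f x) (s • ν) =
      fourierT1 (fun ς => radonTransform (fun x => f x) ν ς) s := by
  obtain ⟨m, rfl⟩ : ∃ m, d = m + 1 := by
    rcases d with _ | m
    · exfalso
      have h0 : ν = 0 := by ext i; exact i.elim0
      rw [h0, norm_zero] at hν
      exact zero_ne_one hν
    · exact ⟨m, rfl⟩
  set F : EuclideanSpace ℝ (Fin (m+1)) → ℂ :=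
    fun x => (f x : ℂ) * Complex.exp (-Complex.I * ((s * ⟪x, ν⟫ : ℝ) : ℂ)) with hF
  have hFi : Integrable F := by
    have h1 : Integrable (fun x : EuclideanSpace ℝ (Fin (m+1)) => ((f x : ℝ) : ℂ)) :=
      f.integrable.ofReal
    have h2 : AEStronglyMeasurable
        (fun x : EuclideanSpace ℝ (Fin (m+1)) => Complex.exp (-Complex.I * ((s * ⟪x, ν⟫ : ℝ) : ℂ)))
        volume := by
      refine Continuous.aestronglyMeasurable ?_
      exact Complex.continuous_exp.comp (continuous_const.mul (Complex.continuous_ofReal.comp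
        (continuous_const.mul (continuous_id.inner continuous_const))))
    have h3 := h1.bdd_mul (c := 1) h2 (Filter.Eventually.of_forall fun x => by
      rw [Complex.norm_exp]
      simp)
    exact h3.congr (Filter.Eventually.of_forall fun x => mul_comm _ _)
  have hmem_ortho : ∀ y : ((ℝ ∙ ν)ᗮ : Submodule ℝ (EuclideanSpace ℝ (Fin (m+1)))),
      ⟪(y : EuclideanSpace ℝ (Fin (m+1))), ν⟫ = 0 := by
    intro y
    have := (Submodule.mem_orthogonal _ _).1 y.2 ν (Submodule.mem_span_singleton_self ν)
    rwa [real_inner_comm] at this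
  have hI : (∫ x : EuclideanSpace ℝ (Fin (m+1)),
        (f x : ℂ) * Complex.exp (-Complex.I * ((⟪x, s • ν⟫ : ℝ) : ℂ)))
      = ∫ ς : ℝ, ((radonTransform (fun x => f x) ν ς : ℝ) : ℂ)
          * Complex.exp (-Complex.I * ((s * ς : ℝ) : ℂ)) := by
    calc (∫ x : EuclideanSpace ℝ (Fin (m+1)),
          (f x : ℂ) * Complex.exp (-Complex.I * ((⟪x, s • ν⟫ : ℝ) : ℂ)))
        = ∫ x, F x := by
          refine integral_congr_ae (Filter.Eventually.of_forall fun x => ?_)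
          rw [hF]
          simp only [real_inner_smul_right]
      _ = ∫ t : ℝ, ∫ y : (ℝ ∙ ν)ᗮ, F (t • ν + (y : EuclideanSpace ℝ (Fin (m+1)))) :=
          slice_integral ν hν F hFi
      _ = _ := by
          refine integral_congr_ae (Filter.Eventually.of_forall fun t => ?_)
          have hx : ∀ y : ((ℝ ∙ ν)ᗮ : Submodule ℝ (EuclideanSpace ℝ (Fin (m+1)))),
              (⟪t • ν + (y : EuclideanSpace ℝ (Fin (m+1))), ν⟫ : ℝ) = t := by
            intro y
            rw [inner_add_left, real_inner_smul_left, hmem_ortho y,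
              real_inner_self_eq_norm_sq, hν]
            ring
          simp only [hF, hx]
          rw [integral_mul_const]
          congr 1
          exact integral_ofReal
  rw [fourierT, fourierT1]
  rw [hI]
  rw [← mul_assoc]
  norm_cast
  rw [← Real.rpow_add (by positivity : (0:ℝ) < 2 * π)]
  norm_num
  left
  push_cast
  ring
end
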